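/- arXiv:2307.14536 — 3 statements merged into one kernel-verified Lean document; each statement's English description precedes it below -/
import Mathlib

section
/- The Hellinger distance between the exact posterior μ and the approximate posterior μ^N satisfies d_Hell(μ, μ^N)² ≤ I₁ + I₂ where I₁ = (1/Z)∫_X (e^{−Φ(u)/2} − e^{−Φ^N(u)/2})² μ_0(du) and I₂ = |Z^{−1/2} − (Z^N)^{−1/2}|² ∫_X e^{−Φ^N(u)} μ_0(du). -/
open MeasureTheory Real

lemma integrable_of_bdd {X : Type*} [MeasurableSpace X] (μ0 : Measure X)
    [IsProbabilityMeasure μ0] {f : X → ℝ} (hm : Measurable f) (C : ℝ)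
    (hC : ∀ u, |f u| ≤ C) : Integrable f μ0 := by
  refine (integrable_const C).mono' hm.aestronglyMeasurable ?_
  filter_upwards with u using hC u

/-- Splitting bound for the squared Hellinger distance between the exact posterior
`dμ/dμ0 = Z⁻¹ e^{-Φ}` and the approximate posterior `dμᴺ/dμ0 = (Zᴺ)⁻¹ e^{-Φᴺ}`. -/
theorem hellinger_sq_le_I1_add_I2
    {X : Type*} [MeasurableSpace X] (μ0 : Measure X) [IsProbabilityMeasure μ0]
    (Φ ΦN : X → ℝ) (hΦm : Measurable Φ) (hΦNm : Measurable ΦN)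
    (hΦ : ∀ u, 0 ≤ Φ u) (hΦN : ∀ u, 0 ≤ ΦN u)
    (Z ZN : ℝ)
    (hZ : Z = ∫ u, Real.exp (-Φ u) ∂μ0) (hZN : ZN = ∫ u, Real.exp (-ΦN u) ∂μ0)
    (hZpos : 0 < Z) (hZNpos : 0 < ZN) :
    (1/2) * ∫ u, (Real.sqrt (Z⁻¹ * Real.exp (-Φ u))
        - Real.sqrt (ZN⁻¹ * Real.exp (-ΦN u)))^2 ∂μ0
      ≤ (1/Z) * (∫ u, (Real.exp (-Φ u / 2) - Real.exp (-ΦN u / 2))^2 ∂μ0)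
        + |1 / Real.sqrt Z - 1 / Real.sqrt ZN|^2 * ∫ u, Real.exp (-ΦN u) ∂μ0 := by
  set c : ℝ := |1 / Real.sqrt Z - 1 / Real.sqrt ZN|
  have hsZ : 0 < Real.sqrt Z := Real.sqrt_pos.mpr hZpos
  have hsZN : 0 < Real.sqrt ZN := Real.sqrt_pos.mpr hZNpos
  -- pointwise rewriting of the square roots
  have hrw : ∀ (t : ℝ) (ht : 0 < t) (a : ℝ),
      Real.sqrt (t⁻¹ * Real.exp (-a)) = (1 / Real.sqrt t) * Real.exp (-a / 2) := by
    intro t ht a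
    rw [Real.sqrt_mul (by positivity), Real.sqrt_inv, Real.exp_half, one_div]
  -- pointwise bound
  have hb : ∀ u, (1/2) * (Real.sqrt (Z⁻¹ * Real.exp (-Φ u))
        - Real.sqrt (ZN⁻¹ * Real.exp (-ΦN u)))^2
      ≤ (1/Z) * (Real.exp (-Φ u / 2) - Real.exp (-ΦN u / 2))^2
        + c^2 * Real.exp (-ΦN u) := by
    intro u
    rw [hrw Z hZpos (Φ u), hrw ZN hZNpos (ΦN u)]
    have key : (1 / Real.sqrt Z) * Real.exp (-Φ u / 2)
        - (1 / Real.sqrt ZN) * Real.exp (-ΦN u / 2)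
        = (1 / Real.sqrt Z) * (Real.exp (-Φ u / 2) - Real.exp (-ΦN u / 2))
          + (1 / Real.sqrt Z - 1 / Real.sqrt ZN) * Real.exp (-ΦN u / 2) := by ring
    rw [key]
    have h2 : ∀ x y : ℝ, (x + y)^2 ≤ 2 * (x^2 + y^2) := by
      intro x y; nlinarith [sq_nonneg (x - y)]
    calc (1/2 : ℝ) * ((1 / Real.sqrt Z) * (Real.exp (-Φ u / 2) - Real.exp (-ΦN u / 2))
          + (1 / Real.sqrt Z - 1 / Real.sqrt ZN) * Real.exp (-ΦN u / 2))^2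
        ≤ (1/2) * (2 * (((1 / Real.sqrt Z) * (Real.exp (-Φ u / 2) - Real.exp (-ΦN u / 2)))^2
          + ((1 / Real.sqrt Z - 1 / Real.sqrt ZN) * Real.exp (-ΦN u / 2))^2)) := by
          have := h2 ((1 / Real.sqrt Z) * (Real.exp (-Φ u / 2) - Real.exp (-ΦN u / 2)))
            ((1 / Real.sqrt Z - 1 / Real.sqrt ZN) * Real.exp (-ΦN u / 2))
          linarith
      _ = (1/Z) * (Real.exp (-Φ u / 2) - Real.exp (-ΦN u / 2))^2
          + c^2 * Real.exp (-ΦN u) := by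
          have he : Real.exp (-ΦN u / 2)^2 = Real.exp (-ΦN u) := by
            rw [sq, ← Real.exp_add]; ring_nf
          rw [mul_pow, mul_pow, div_pow, one_pow, Real.sq_sqrt hZpos.le, he]
          have hc : c^2 = (1 / Real.sqrt Z - 1 / Real.sqrt ZN)^2 := sq_abs _
          rw [hc]; ring
  -- integrability facts
  have hexp_le : ∀ (a : ℝ), 0 ≤ a → Real.exp (-a) ≤ 1 := fun a ha =>
    Real.exp_le_one_iff.mpr (by linarith)
  have hf_int : Integrable (fun u => (Real.sqrt (Z⁻¹ * Real.exp (-Φ u))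
      - Real.sqrt (ZN⁻¹ * Real.exp (-ΦN u)))^2) μ0 := by
    apply integrable_of_bdd μ0 (by fun_prop) ((1 / Real.sqrt Z + 1 / Real.sqrt ZN)^2)
    intro u
    rw [abs_of_nonneg (sq_nonneg _), hrw Z hZpos (Φ u), hrw ZN hZNpos (ΦN u)]
    have h1 : Real.exp (-Φ u / 2) ≤ 1 := by
      rw [neg_div]; exact hexp_le _ (by linarith [hΦ u])
    have h2 : Real.exp (-ΦN u / 2) ≤ 1 := by
      rw [neg_div]; exact hexp_le _ (by linarith [hΦN u])
    have e1 := Real.exp_pos (-Φ u / 2)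
    have e2 := Real.exp_pos (-ΦN u / 2)
    have hA : |(1 / Real.sqrt Z) * Real.exp (-Φ u / 2)
        - (1 / Real.sqrt ZN) * Real.exp (-ΦN u / 2)| ≤ 1 / Real.sqrt Z + 1 / Real.sqrt ZN := by
      rw [abs_sub_le_iff]
      constructor <;>
        nlinarith [mul_nonneg (one_div_nonneg.mpr hsZ.le) (sub_nonneg.mpr h1),
          mul_nonneg (one_div_nonneg.mpr hsZN.le) (sub_nonneg.mpr h2),
          mul_pos (one_div_pos.mpr hsZ) e1, mul_pos (one_div_pos.mpr hsZN) e2,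
          one_div_pos.mpr hsZ, one_div_pos.mpr hsZN]
    calc ((1 / Real.sqrt Z) * Real.exp (-Φ u / 2)
        - (1 / Real.sqrt ZN) * Real.exp (-ΦN u / 2))^2
        = |(1 / Real.sqrt Z) * Real.exp (-Φ u / 2)
          - (1 / Real.sqrt ZN) * Real.exp (-ΦN u / 2)|^2 := (sq_abs _).symm
      _ ≤ (1 / Real.sqrt Z + 1 / Real.sqrt ZN)^2 := by
          apply pow_le_pow_left₀ (abs_nonneg _) hA 2
  have hg1_int : Integrable (fun u => (Real.exp (-Φ u / 2) - Real.exp (-ΦN u / 2))^2) μ0 := by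
    apply integrable_of_bdd μ0 (by fun_prop) 1
    intro u
    rw [abs_of_nonneg (sq_nonneg _)]
    have h1 : Real.exp (-Φ u / 2) ≤ 1 := by
      rw [neg_div]; exact hexp_le _ (by linarith [hΦ u])
    have h2 : Real.exp (-ΦN u / 2) ≤ 1 := by
      rw [neg_div]; exact hexp_le _ (by linarith [hΦN u])
    have e1 := Real.exp_pos (-Φ u / 2)
    have e2 := Real.exp_pos (-ΦN u / 2)
    nlinarith
  have hg2_int : Integrable (fun u => Real.exp (-ΦN u)) μ0 := by
    apply integrable_of_bdd μ0 (by fun_prop) 1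
    intro u
    rw [abs_of_nonneg (Real.exp_pos _).le]
    exact hexp_le _ (hΦN u)
  -- put it together
  calc (1/2) * ∫ u, (Real.sqrt (Z⁻¹ * Real.exp (-Φ u))
        - Real.sqrt (ZN⁻¹ * Real.exp (-ΦN u)))^2 ∂μ0
      = ∫ u, (1/2) * (Real.sqrt (Z⁻¹ * Real.exp (-Φ u))
        - Real.sqrt (ZN⁻¹ * Real.exp (-ΦN u)))^2 ∂μ0 := (integral_const_mul _ _).symm
    _ ≤ ∫ u, ((1/Z) * (Real.exp (-Φ u / 2) - Real.exp (-ΦN u / 2))^2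
        + c^2 * Real.exp (-ΦN u)) ∂μ0 := by
        apply integral_mono (hf_int.const_mul _)
          ((hg1_int.const_mul _).add (hg2_int.const_mul _)) hb
    _ = (1/Z) * (∫ u, (Real.exp (-Φ u / 2) - Real.exp (-ΦN u / 2))^2 ∂μ0)
        + c^2 * ∫ u, Real.exp (-ΦN u) ∂μ0 := by
        rw [integral_add (hg1_int.const_mul _) (hg2_int.const_mul _),
          integral_const_mul, integral_const_mul]
end

section
/- (Posterior convergence under pointwise forward-map convergence) Suppose G^N(u) → G(u) for μ_0-a.e. u, and all G^N, G are uniformly bounded measurable maps into ℝ^J. Then with Φ, Φ^N the corresponding Gaussian potentials and μ, μ^N the corresponding posteriors, d_Hell(μ^N, μ) → 0 as N → ∞. -/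
open MeasureTheory Filter

/-- Posterior convergence under pointwise (a.e.) convergence of uniformly bounded
forward maps: the Hellinger distance between the approximate posterior and the exact
posterior tends to zero. -/
theorem posterior_convergence_pointwise_forward
    {X : Type*} [MeasurableSpace X] (μ0 : Measure X) [IsProbabilityMeasure μ0]
    {J : ℕ} (y : EuclideanSpace ℝ (Fin J)) (γ M : ℝ) (hγ : 0 < γ)
    (G : X → EuclideanSpace ℝ (Fin J)) (GN : ℕ → X → EuclideanSpace ℝ (Fin J))
    (hGm : Measurable G) (hGNm : ∀ N, Measurable (GN N))
    (hGb : ∀ u, ‖G u‖ ≤ M) (hGNb : ∀ N u, ‖GN N u‖ ≤ M)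
    (hconv : ∀ᵐ u ∂μ0, Tendsto (fun N => GN N u) atTop (nhds (G u)))
    (Φ : X → ℝ) (hΦ : Φ = fun u => ‖y - G u‖^2 / (2 * γ^2))
    (ΦN : ℕ → X → ℝ) (hΦN : ΦN = fun N u => ‖y - GN N u‖^2 / (2 * γ^2))
    (Z : ℝ) (hZ : Z = ∫ u, Real.exp (-Φ u) ∂μ0)
    (ZN : ℕ → ℝ) (hZN : ZN = fun N => ∫ u, Real.exp (-ΦN N u) ∂μ0) :
    Tendsto (fun N => Real.sqrt ((1/2) * ∫ u,
        (Real.sqrt (Z⁻¹ * Real.exp (-Φ u))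
          - Real.sqrt ((ZN N)⁻¹ * Real.exp (-ΦN N u)))^2 ∂μ0))
      atTop (nhds 0) := by
  -- X is nonempty
  have hXne : Nonempty X := by
    by_contra h
    rw [not_nonempty_iff] at h
    have h1 : μ0 Set.univ = 1 := measure_univ
    rw [Set.univ_eq_empty_iff.mpr h] at h1
    simp at h1
  obtain ⟨u0⟩ := hXne
  have hM : (0:ℝ) ≤ M := le_trans (norm_nonneg _) (hGb u0)
  have hγ2 : (0:ℝ) < 2 * γ^2 := by positivity
  set C : ℝ := (‖y‖ + M)^2 / (2 * γ^2) with hC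
  -- bounds on potentials
  have hΦle : ∀ u, Φ u ≤ C := by
    intro u
    rw [hΦ]
    apply div_le_div_of_nonneg_right ?_ hγ2.le
    · exact pow_le_pow_left₀ (norm_nonneg _)
        ((norm_sub_le _ _).trans (by linarith [hGb u])) 2
  have hΦNle : ∀ N u, ΦN N u ≤ C := by
    intro N u
    rw [hΦN]
    apply div_le_div_of_nonneg_right ?_ hγ2.le
    · exact pow_le_pow_left₀ (norm_nonneg _)
        ((norm_sub_le _ _).trans (by linarith [hGNb N u])) 2
  have hΦ0 : ∀ u, 0 ≤ Φ u := by intro u; rw [hΦ]; positivity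
  have hΦN0 : ∀ N u, 0 ≤ ΦN N u := by intro N u; rw [hΦN]; positivity
  have hexp1 : ∀ u, Real.exp (-Φ u) ≤ 1 :=
    fun u => Real.exp_le_one_iff.mpr (by linarith [hΦ0 u])
  have hexpN1 : ∀ N u, Real.exp (-ΦN N u) ≤ 1 :=
    fun N u => Real.exp_le_one_iff.mpr (by linarith [hΦN0 N u])
  have hexpC : ∀ u, Real.exp (-C) ≤ Real.exp (-Φ u) :=
    fun u => Real.exp_le_exp.mpr (neg_le_neg (hΦle u))
  have hexpNC : ∀ N u, Real.exp (-C) ≤ Real.exp (-ΦN N u) :=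
    fun N u => Real.exp_le_exp.mpr (neg_le_neg (hΦNle N u))
  -- measurability
  have hmΦ : Measurable fun u => Real.exp (-Φ u) := by
    rw [hΦ]
    exact ((((measurable_const.sub hGm).norm.pow_const 2).div_const _).neg).exp
  have hmΦN : ∀ N, Measurable fun u => Real.exp (-ΦN N u) := by
    intro N
    rw [hΦN]
    exact ((((measurable_const.sub (hGNm N)).norm.pow_const 2).div_const _).neg).exp
  -- integrability
  have hint : Integrable (fun u => Real.exp (-Φ u)) μ0 := by
    apply (integrable_const (1:ℝ)).mono' hmΦ.aestronglyMeasurable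
    filter_upwards with u
    rw [Real.norm_eq_abs, abs_of_pos (Real.exp_pos _)]
    exact hexp1 u
  have hintN : ∀ N, Integrable (fun u => Real.exp (-ΦN N u)) μ0 := by
    intro N
    apply (integrable_const (1:ℝ)).mono' (hmΦN N).aestronglyMeasurable
    filter_upwards with u
    rw [Real.norm_eq_abs, abs_of_pos (Real.exp_pos _)]
    exact hexpN1 N u
  -- pointwise convergence of potentials
  have hΦconv : ∀ᵐ u ∂μ0, Tendsto (fun N => Real.exp (-ΦN N u)) atTop
      (nhds (Real.exp (-Φ u))) := by
    filter_upwards [hconv] with u hu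
    rw [hΦ, hΦN]
    exact (Real.continuous_exp.tendsto _).comp
      ((((tendsto_const_nhds.sub hu).norm.pow 2).div_const _).neg)
  -- ZN → Z
  have hZc : Tendsto ZN atTop (nhds Z) := by
    rw [hZ, hZN]
    exact tendsto_integral_of_dominated_convergence (fun _ => (1:ℝ))
      (fun N => (hmΦN N).aestronglyMeasurable) (integrable_const 1)
      (fun N => by
        filter_upwards with u
        rw [Real.norm_eq_abs, abs_of_pos (Real.exp_pos _)]
        exact hexpN1 N u)
      hΦconv
  -- lower bounds on Z and ZN
  have hZlb : Real.exp (-C) ≤ Z := by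
    rw [hZ]
    calc Real.exp (-C) = ∫ _, Real.exp (-C) ∂μ0 := by simp
      _ ≤ ∫ u, Real.exp (-Φ u) ∂μ0 :=
        integral_mono (integrable_const _) hint (fun u => hexpC u)
  have hZNlb : ∀ N, Real.exp (-C) ≤ ZN N := by
    intro N
    rw [hZN]
    calc Real.exp (-C) = ∫ _, Real.exp (-C) ∂μ0 := by simp
      _ ≤ ∫ u, Real.exp (-ΦN N u) ∂μ0 :=
        integral_mono (integrable_const _) (hintN N) (fun u => hexpNC N u)
  have hZpos : 0 < Z := lt_of_lt_of_le (Real.exp_pos _) hZlb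
  have hZNpos : ∀ N, 0 < ZN N := fun N => lt_of_lt_of_le (Real.exp_pos _) (hZNlb N)
  have hexpCinv : Real.exp C = (Real.exp (-C))⁻¹ := by rw [Real.exp_neg, inv_inv]
  have hZinv : Z⁻¹ ≤ Real.exp C := by
    rw [hexpCinv]
    exact inv_anti₀ (Real.exp_pos _) hZlb
  have hZNinv : ∀ N, (ZN N)⁻¹ ≤ Real.exp C := by
    intro N
    rw [hexpCinv]
    exact inv_anti₀ (Real.exp_pos _) (hZNlb N)
  -- bound on the sqrt terms
  have hsq : ∀ (z : ℝ) (t : ℝ), 0 < z → z⁻¹ ≤ Real.exp C → Real.exp (-t) ≤ 1 →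
      Real.sqrt (z⁻¹ * Real.exp (-t)) ≤ Real.sqrt (Real.exp C) := by
    intro z t hz hzC ht
    apply Real.sqrt_le_sqrt
    calc z⁻¹ * Real.exp (-t) ≤ Real.exp C * 1 := by
          apply mul_le_mul hzC ht (Real.exp_pos _).le (Real.exp_pos _).le
      _ = Real.exp C := mul_one _
  -- dominated convergence for the Hellinger integrand
  have hmain : Tendsto (fun N => ∫ u,
      (Real.sqrt (Z⁻¹ * Real.exp (-Φ u))
        - Real.sqrt ((ZN N)⁻¹ * Real.exp (-ΦN N u)))^2 ∂μ0)
      atTop (nhds (∫ _, (0:ℝ) ∂μ0)) := by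
    apply tendsto_integral_of_dominated_convergence (fun _ => Real.exp C)
    · intro N
      exact (((measurable_const.mul hmΦ).sqrt.sub
        ((measurable_const.mul (hmΦN N)).sqrt)).pow_const 2).aestronglyMeasurable
    · exact integrable_const _
    · intro N
      filter_upwards with u
      rw [Real.norm_eq_abs, abs_of_nonneg (sq_nonneg _)]
      have h1 := hsq Z (Φ u) hZpos hZinv (hexp1 u)
      have h2 := hsq (ZN N) (ΦN N u) (hZNpos N) (hZNinv N) (hexpN1 N u)
      have h3 : (0:ℝ) ≤ Real.sqrt (Z⁻¹ * Real.exp (-Φ u)) := Real.sqrt_nonneg _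
      have h4 : (0:ℝ) ≤ Real.sqrt ((ZN N)⁻¹ * Real.exp (-ΦN N u)) := Real.sqrt_nonneg _
      have hb : (Real.sqrt (Z⁻¹ * Real.exp (-Φ u))
          - Real.sqrt ((ZN N)⁻¹ * Real.exp (-ΦN N u)))^2 ≤ (Real.sqrt (Real.exp C))^2 :=
        sq_le_sq' (by linarith) (by linarith)
      rwa [Real.sq_sqrt (Real.exp_pos _).le] at hb
    · filter_upwards [hΦconv] with u hu
      have h1 : Tendsto (fun N => Real.sqrt ((ZN N)⁻¹ * Real.exp (-ΦN N u))) atTop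
          (nhds (Real.sqrt (Z⁻¹ * Real.exp (-Φ u)))) :=
        (Real.continuous_sqrt.tendsto _).comp ((hZc.inv₀ hZpos.ne').mul hu)
      have h2 := ((tendsto_const_nhds (x := Real.sqrt (Z⁻¹ * Real.exp (-Φ u)))
        (f := atTop)).sub h1).pow 2
      simpa using h2
  have hI : Tendsto (fun N => (1/2 : ℝ) * ∫ u,
      (Real.sqrt (Z⁻¹ * Real.exp (-Φ u))
        - Real.sqrt ((ZN N)⁻¹ * Real.exp (-ΦN N u)))^2 ∂μ0) atTop (nhds 0) := by
    have := hmain.const_mul (1/2 : ℝ)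
    simpa using this
  have := (Real.continuous_sqrt.tendsto 0).comp hI
  simpa only [Function.comp_def, Real.sqrt_zero] using this
end

section
/- (Posterior rate from forward-map rate) Assume |G(u) − G^N(u)| ≤ M(‖u‖_X)ψ(N) for all u with ψ(N) → 0, exp(M(‖u‖_X)) ∈ L¹_{μ_0}, and G, G^N uniformly bounded. Then for the Gaussian-potential posteriors, d_Hell(μ, μ^N) ≤ Cψ(N) for all sufficiently large N. -/
open MeasureTheory Filter

private lemma exp_neg_lip {s t : ℝ} (hs : 0 ≤ s) (ht : 0 ≤ t) :
    |Real.exp (-s) - Real.exp (-t)| ≤ |s - t| := by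
  wlog h : t ≤ s generalizing s t
  · rw [abs_sub_comm, abs_sub_comm s t]; exact this ht hs (le_of_not_ge h)
  have h1 : Real.exp (-t) ≤ 1 := Real.exp_le_one_iff.mpr (by linarith)
  have h2 : 1 - (s - t) ≤ Real.exp (-(s - t)) := by
    have := Real.add_one_le_exp (-(s - t)); linarith
  have h5 : Real.exp (-(s - t)) ≤ 1 := Real.exp_le_one_iff.mpr (by linarith)
  have h3 : Real.exp (-t) * Real.exp (-(s - t)) = Real.exp (-s) := by
    rw [← Real.exp_add]; ring_nf
  have h4 : Real.exp (-s) ≤ Real.exp (-t) := Real.exp_le_exp.mpr (by linarith)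
  rw [abs_of_nonpos (by linarith), abs_of_nonneg (by linarith)]
  nlinarith [Real.exp_pos (-t), Real.exp_pos (-(s - t))]

private lemma sq_le_four_exp {x : ℝ} (hx : 0 ≤ x) : x^2 ≤ 4 * Real.exp x := by
  have h1 : x/2 ≤ Real.exp (x/2) := by
    have := Real.add_one_le_exp (x/2); linarith
  have h2 : (x/2)^2 ≤ (Real.exp (x/2))^2 := pow_le_pow_left₀ (by linarith) h1 2
  have h3 : (Real.exp (x/2))^2 = Real.exp x := by
    rw [sq, ← Real.exp_add]; ring_nf
  nlinarith

private lemma two_sq_bound (x z : ℝ) : (x + z)^2 ≤ 2*x^2 + 2*z^2 := by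
  nlinarith [sq_nonneg (x - z)]

private lemma sqrt_exp_neg (x : ℝ) : Real.sqrt (Real.exp (-x)) = Real.exp (-(x/2)) := by
  rw [show Real.exp (-x) = (Real.exp (-(x/2)))^2 by rw [sq, ← Real.exp_add]; ring_nf,
    Real.sqrt_sq (Real.exp_pos _).le]

set_option maxHeartbeats 1000000 in
/-- Posterior rate from a forward-map rate: if `|G(u) − Gᴺ(u)| ≤ M(‖u‖) ψ(N)` with
`ψ(N) → 0` and `exp(M(‖u‖))` is `μ0`-integrable, then the Hellinger distance between
the exact and approximate Gaussian-potential posteriors is `≤ C ψ(N)` for all large `N`. -/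
theorem posterior_rate_from_forward_rate
    {X : Type*} [NormedAddCommGroup X] [MeasurableSpace X] [BorelSpace X]
    (μ0 : Measure X) [IsProbabilityMeasure μ0]
    {J : ℕ} (y : EuclideanSpace ℝ (Fin J)) (γ Mb : ℝ) (hγ : 0 < γ)
    (G : X → EuclideanSpace ℝ (Fin J)) (GN : ℕ → X → EuclideanSpace ℝ (Fin J))
    (hGm : Measurable G) (hGNm : ∀ N, Measurable (GN N))
    (hGb : ∀ u, ‖G u‖ ≤ Mb) (hGNb : ∀ N u, ‖GN N u‖ ≤ Mb)
    (M : ℝ → ℝ) (hMm : Measurable M) (hMpos : ∀ r, 0 ≤ M r)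
    (ψ : ℕ → ℝ) (hψpos : ∀ N, 0 ≤ ψ N) (hψ : Tendsto ψ atTop (nhds 0))
    (hrate : ∀ (N : ℕ) (u : X), ‖G u - GN N u‖ ≤ M ‖u‖ * ψ N)
    (hint : Integrable (fun u => Real.exp (M ‖u‖)) μ0)
    (Φ : X → ℝ) (hΦ : Φ = fun u => ‖y - G u‖^2 / (2 * γ^2))
    (ΦN : ℕ → X → ℝ) (hΦN : ΦN = fun N u => ‖y - GN N u‖^2 / (2 * γ^2))
    (Z : ℝ) (hZ : Z = ∫ u, Real.exp (-Φ u) ∂μ0) (hZpos : 0 < Z)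
    (ZN : ℕ → ℝ) (hZN : ZN = fun N => ∫ u, Real.exp (-ΦN N u) ∂μ0)
    (hZNpos : ∀ N, 0 < ZN N) :
    ∃ C : ℝ, 0 < C ∧ ∃ N0 : ℕ, ∀ N ≥ N0,
      Real.sqrt ((1/2) * ∫ u,
        (Real.sqrt (Z⁻¹ * Real.exp (-Φ u))
          - Real.sqrt ((ZN N)⁻¹ * Real.exp (-ΦN N u)))^2 ∂μ0) ≤ C * ψ N := by
  -- X is nonempty since it carries a probability measure
  have hXne : Nonempty X := by
    by_contra h
    rw [not_nonempty_iff] at h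
    have h1 : μ0 Set.univ = 1 := measure_univ
    rw [Set.univ_eq_empty_iff.mpr h] at h1
    simp at h1
  obtain ⟨u0⟩ := hXne
  have hMb : 0 ≤ Mb := le_trans (norm_nonneg _) (hGb u0)
  have h2γ : (0:ℝ) < 2 * γ ^ 2 := by nlinarith
  set R : ℝ := ‖y‖ + Mb with hR
  have hR0 : 0 ≤ R := by positivity
  set K : ℝ := R ^ 2 / (2 * γ ^ 2) with hK
  have hK0 : 0 ≤ K := by positivity
  set L : ℝ := R / γ ^ 2 with hL
  have hL0 : 0 ≤ L := by positivity
  set m : ℝ := Real.exp (-K) with hm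
  have hm0 : 0 < m := Real.exp_pos _
  clear_value R K L m
  -- generic facts about Gaussian-type potentials
  have gen : ∀ H : X → EuclideanSpace ℝ (Fin J), Measurable H → (∀ u, ‖H u‖ ≤ Mb) →
      (∀ u, 0 ≤ ‖y - H u‖ ^ 2 / (2 * γ ^ 2)) ∧ (∀ u, ‖y - H u‖ ^ 2 / (2 * γ ^ 2) ≤ K) ∧
      Integrable (fun u => Real.exp (-(‖y - H u‖ ^ 2 / (2 * γ ^ 2)))) μ0 ∧
      m ≤ ∫ u, Real.exp (-(‖y - H u‖ ^ 2 / (2 * γ ^ 2))) ∂μ0 := by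
    intro H hHm hHb
    have hRb : ∀ u, ‖y - H u‖ ≤ R := fun u =>
      (norm_sub_le _ _).trans (by have := hHb u; rw [hR]; linarith)
    have h0 : ∀ u, 0 ≤ ‖y - H u‖ ^ 2 / (2 * γ ^ 2) := fun u => by positivity
    have hKb : ∀ u, ‖y - H u‖ ^ 2 / (2 * γ ^ 2) ≤ K := by
      intro u
      rw [hK]
      exact (div_le_div_iff_of_pos_right h2γ).mpr (pow_le_pow_left₀ (norm_nonneg _) (hRb u) 2)
    have hnm : Measurable fun u => ‖y - H u‖ :=
      (Continuous.measurable (by continuity :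
        Continuous fun v : EuclideanSpace ℝ (Fin J) => ‖y - v‖)).comp hHm
    have hmeas : Measurable fun u => Real.exp (-(‖y - H u‖ ^ 2 / (2 * γ ^ 2))) :=
      Real.measurable_exp.comp ((hnm.pow_const 2).div_const _).neg
    have hint1 : Integrable (fun u => Real.exp (-(‖y - H u‖ ^ 2 / (2 * γ ^ 2)))) μ0 := by
      apply Integrable.mono' (integrable_const 1) hmeas.aestronglyMeasurable
      filter_upwards with u
      rw [Real.norm_eq_abs, abs_of_pos (Real.exp_pos _)]
      exact Real.exp_le_one_iff.mpr (by linarith [h0 u])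
    refine ⟨h0, hKb, hint1, ?_⟩
    have hlow : ∀ u, m ≤ Real.exp (-(‖y - H u‖ ^ 2 / (2 * γ ^ 2))) := by
      intro u
      rw [hm]
      exact Real.exp_le_exp.mpr (by linarith [hKb u])
    have := integral_mono (integrable_const m) hint1 hlow
    simpa using this
  have hG := gen G hGm hGb
  have hGN' := fun N => gen (GN N) (hGNm N) (hGNb N)
  have hΦ0 : ∀ u, 0 ≤ Φ u := by simp only [hΦ]; exact hG.1
  have hΦN0 : ∀ N u, 0 ≤ ΦN N u := by intro N; simp only [hΦN]; exact (hGN' N).1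
  have hIntΦ : Integrable (fun u => Real.exp (-Φ u)) μ0 := by
    simp only [hΦ]; exact hG.2.2.1
  have hIntΦN : ∀ N, Integrable (fun u => Real.exp (-ΦN N u)) μ0 := by
    intro N; simp only [hΦN]; exact (hGN' N).2.2.1
  have hZm : m ≤ Z := by rw [hZ]; simp only [hΦ]; exact hG.2.2.2
  have hZNm : ∀ N, m ≤ ZN N := by
    intro N; simp only [hZN, hΦN]; exact (hGN' N).2.2.2
  -- integrability of M and M^2
  have hMmeas : Measurable fun u : X => M ‖u‖ := hMm.comp measurable_norm
  have hIntM : Integrable (fun u => M ‖u‖) μ0 := by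
    apply hint.mono' hMmeas.aestronglyMeasurable
    filter_upwards with u
    rw [Real.norm_eq_abs, abs_of_nonneg (hMpos _)]
    have := Real.add_one_le_exp (M ‖u‖); linarith
  have hIntM2 : Integrable (fun u => (M ‖u‖) ^ 2) μ0 := by
    apply (hint.const_mul 4).mono' (hMmeas.pow_const 2).aestronglyMeasurable
    filter_upwards with u
    rw [Real.norm_eq_abs, abs_of_nonneg (by positivity)]
    exact sq_le_four_exp (hMpos _)
  set I1 : ℝ := ∫ u, M ‖u‖ ∂μ0 with hI1
  set I2 : ℝ := ∫ u, (M ‖u‖) ^ 2 ∂μ0 with hI2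
  have hI10 : 0 ≤ I1 := by rw [hI1]; exact integral_nonneg fun u => hMpos _
  clear_value I1 I2
  -- pointwise potential difference
  have hPhidiff : ∀ N u, |Φ u - ΦN N u| ≤ L * (M ‖u‖ * ψ N) := by
    intro N u
    simp only [hΦ, hΦN]
    set a := ‖y - G u‖ with ha'
    set b := ‖y - GN N u‖ with hb'
    have ha : 0 ≤ a := norm_nonneg _
    have hb : 0 ≤ b := norm_nonneg _
    have haR : a ≤ R := (norm_sub_le _ _).trans (by have := hGb u; rw [hR]; linarith)
    have hbR : b ≤ R := (norm_sub_le _ _).trans (by have := hGNb N u; rw [hR]; linarith)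
    have h1 : |a - b| ≤ M ‖u‖ * ψ N := by
      have h := abs_norm_sub_norm_le (y - G u) (y - GN N u)
      have he : (y - G u) - (y - GN N u) = GN N u - G u := by abel
      rw [he, norm_sub_rev (GN N u) (G u)] at h
      exact h.trans (hrate N u)
    have hMψ : 0 ≤ M ‖u‖ * ψ N := mul_nonneg (hMpos _) (hψpos N)
    have habs : |a ^ 2 - b ^ 2| ≤ (M ‖u‖ * ψ N) * (2 * R) := by
      have he : a ^ 2 - b ^ 2 = (a - b) * (a + b) := by ring
      rw [he, abs_mul]
      have hab2 : |a + b| ≤ 2 * R := by rw [abs_of_nonneg (by linarith)]; linarith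
      exact mul_le_mul h1 hab2 (abs_nonneg _) hMψ
    rw [div_sub_div_same, abs_div, abs_of_pos h2γ, div_le_iff₀ h2γ]
    calc |a ^ 2 - b ^ 2| ≤ (M ‖u‖ * ψ N) * (2 * R) := habs
      _ = L * (M ‖u‖ * ψ N) * (2 * γ ^ 2) := by
          rw [hL]; field_simp
  -- normalization constant difference
  have hZdiff : ∀ N, |Z - ZN N| ≤ L * I1 * ψ N := by
    intro N
    have hsub : Z - ZN N = ∫ u, (Real.exp (-Φ u) - Real.exp (-ΦN N u)) ∂μ0 := by
      simp only [hZ, hZN]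
      exact (integral_sub hIntΦ (hIntΦN N)).symm
    rw [hsub, ← Real.norm_eq_abs]
    have hb : ‖∫ u, (Real.exp (-Φ u) - Real.exp (-ΦN N u)) ∂μ0‖
        ≤ ∫ u, L * ψ N * M ‖u‖ ∂μ0 := by
      apply norm_integral_le_of_norm_le (hIntM.const_mul (L * ψ N))
      filter_upwards with u
      rw [Real.norm_eq_abs]
      calc |Real.exp (-Φ u) - Real.exp (-ΦN N u)| ≤ |Φ u - ΦN N u| :=
            exp_neg_lip (hΦ0 u) (hΦN0 N u)
        _ ≤ L * (M ‖u‖ * ψ N) := hPhidiff N u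
        _ = L * ψ N * M ‖u‖ := by ring
    refine hb.trans ?_
    rw [integral_const_mul, ← hI1]
    exact le_of_eq (by ring)
  -- pointwise bound on the Hellinger integrand
  have hpt : ∀ N u, (Real.sqrt (Z⁻¹ * Real.exp (-Φ u))
      - Real.sqrt ((ZN N)⁻¹ * Real.exp (-ΦN N u))) ^ 2
      ≤ ψ N ^ 2 * (L ^ 2 / (2 * m) * (M ‖u‖) ^ 2 + L ^ 2 * I1 ^ 2 / (2 * m ^ 3)) := by
    intro N u
    rw [Real.sqrt_mul (inv_nonneg.mpr hZpos.le), Real.sqrt_mul (inv_nonneg.mpr (hZNpos N).le),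
      Real.sqrt_inv, Real.sqrt_inv, sqrt_exp_neg, sqrt_exp_neg]
    set p := Real.sqrt Z with hp'
    set q := Real.sqrt (ZN N) with hq'
    set A := Real.exp (-(Φ u / 2)) with hA'
    set B := Real.exp (-(ΦN N u / 2)) with hB'
    have hp : 0 < p := Real.sqrt_pos.mpr hZpos
    have hq : 0 < q := Real.sqrt_pos.mpr (hZNpos N)
    have hpm : Real.sqrt m ≤ p := Real.sqrt_le_sqrt hZm
    have hqm : Real.sqrt m ≤ q := Real.sqrt_le_sqrt (hZNm N)
    have hsm : Real.sqrt m ^ 2 = m := Real.sq_sqrt hm0.le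
    have hsm0 : 0 ≤ Real.sqrt m := Real.sqrt_nonneg m
    have hp2 : p ^ 2 = Z := Real.sq_sqrt hZpos.le
    have hq2 : q ^ 2 = ZN N := Real.sq_sqrt (hZNpos N).le
    have hpm2 : m ≤ p ^ 2 := hsm ▸ pow_le_pow_left₀ hsm0 hpm 2
    have hqm2 : m ≤ q ^ 2 := hsm ▸ pow_le_pow_left₀ hsm0 hqm 2
    have hpqm : m ≤ p * q := by
      have h := mul_le_mul hpm hqm hsm0 hp.le
      rw [← Real.mul_self_sqrt hm0.le]
      linarith
    have hB1 : B ≤ 1 := Real.exp_le_one_iff.mpr (by linarith [hΦN0 N u])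
    have hB0 : 0 < B := Real.exp_pos _
    have hAB : |A - B| ≤ L * (M ‖u‖ * ψ N) / 2 := by
      have h1 := exp_neg_lip (by linarith [hΦ0 u] : 0 ≤ Φ u / 2)
        (by linarith [hΦN0 N u] : 0 ≤ ΦN N u / 2)
      have h2 : |Φ u / 2 - ΦN N u / 2| = |Φ u - ΦN N u| / 2 := by
        rw [show Φ u / 2 - ΦN N u / 2 = (Φ u - ΦN N u) / 2 by ring, abs_div]
        norm_num
      have h3 := hPhidiff N u
      calc |A - B| ≤ |Φ u / 2 - ΦN N u / 2| := h1
        _ = |Φ u - ΦN N u| / 2 := h2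
        _ ≤ L * (M ‖u‖ * ψ N) / 2 := by linarith
    have hAB2 : (A - B) ^ 2 ≤ (L * (M ‖u‖ * ψ N) / 2) ^ 2 := by
      rw [← sq_abs]
      exact pow_le_pow_left₀ (abs_nonneg _) hAB 2
    clear_value p q A B
    have hsZ : (p⁻¹) ^ 2 ≤ m⁻¹ := by
      rw [inv_pow, hp2]
      exact inv_anti₀ hm0 hZm
    have hstq : p⁻¹ - q⁻¹ = (q - p) / (p * q) := by
      field_simp
    have hsum : 4 * m ≤ (q + p) ^ 2 := by
      have he : (q + p) ^ 2 = q ^ 2 + 2 * (p * q) + p ^ 2 := by ring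
      linarith
    have h1 : (q - p) ^ 2 * (4 * m) ≤ (ZN N - Z) ^ 2 := by
      calc (q - p) ^ 2 * (4 * m) ≤ (q - p) ^ 2 * (q + p) ^ 2 :=
            mul_le_mul_of_nonneg_left hsum (sq_nonneg _)
        _ = (q ^ 2 - p ^ 2) ^ 2 := by ring
        _ = (ZN N - Z) ^ 2 := by rw [hp2, hq2]
    have h2 : (ZN N - Z) ^ 2 ≤ (L * I1 * ψ N) ^ 2 := by
      have h := hZdiff N
      have h' : |Z - ZN N| ^ 2 ≤ (L * I1 * ψ N) ^ 2 := pow_le_pow_left₀ (abs_nonneg _) h 2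
      rw [sq_abs] at h'
      calc (ZN N - Z) ^ 2 = (Z - ZN N) ^ 2 := by ring
        _ ≤ _ := h'
    have hst2 : (p⁻¹ - q⁻¹) ^ 2 ≤ (L * I1 * ψ N) ^ 2 / (4 * m ^ 3) := by
      rw [hstq, div_pow, div_le_div_iff₀ (pow_pos (mul_pos hp hq) 2)
        (mul_pos (by norm_num) (pow_pos hm0 3))]
      have hpq2 : m ^ 2 ≤ (p * q) ^ 2 := pow_le_pow_left₀ hm0.le hpqm 2
      have t2 := mul_le_mul_of_nonneg_right (h1.trans h2) (sq_nonneg m)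
      have t3 := mul_le_mul_of_nonneg_left hpq2 (sq_nonneg (L * I1 * ψ N))
      calc (q - p) ^ 2 * (4 * m ^ 3) = (q - p) ^ 2 * (4 * m) * m ^ 2 := by ring
        _ ≤ (L * I1 * ψ N) ^ 2 * m ^ 2 := t2
        _ ≤ (L * I1 * ψ N) ^ 2 * (p * q) ^ 2 := t3
    have hX0 : (0:ℝ) ≤ (L * I1 * ψ N) ^ 2 / (4 * m ^ 3) :=
      div_nonneg (sq_nonneg _) (mul_pos (by norm_num : (0:ℝ) < 4) (pow_pos hm0 3)).le
    have e1 : (p⁻¹) ^ 2 * (A - B) ^ 2 ≤ m⁻¹ * (L * (M ‖u‖ * ψ N) / 2) ^ 2 :=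
      mul_le_mul hsZ hAB2 (sq_nonneg _) (inv_nonneg.mpr hm0.le)
    have e2 : (p⁻¹ - q⁻¹) ^ 2 * B ^ 2 ≤ (L * I1 * ψ N) ^ 2 / (4 * m ^ 3) * 1 := by
      apply mul_le_mul hst2 ?_ (sq_nonneg _) hX0
      exact pow_le_one₀ hB0.le hB1
    have key : (p⁻¹ * A - q⁻¹ * B) ^ 2
        ≤ 2 * (p⁻¹) ^ 2 * (A - B) ^ 2 + 2 * (p⁻¹ - q⁻¹) ^ 2 * B ^ 2 := by
      have h := two_sq_bound (p⁻¹ * (A - B)) ((p⁻¹ - q⁻¹) * B)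
      calc (p⁻¹ * A - q⁻¹ * B) ^ 2
          = (p⁻¹ * (A - B) + (p⁻¹ - q⁻¹) * B) ^ 2 := by ring
        _ ≤ 2 * (p⁻¹ * (A - B)) ^ 2 + 2 * ((p⁻¹ - q⁻¹) * B) ^ 2 := h
        _ = 2 * (p⁻¹) ^ 2 * (A - B) ^ 2 + 2 * (p⁻¹ - q⁻¹) ^ 2 * B ^ 2 := by ring
    calc (p⁻¹ * A - q⁻¹ * B) ^ 2
        ≤ 2 * (p⁻¹) ^ 2 * (A - B) ^ 2 + 2 * (p⁻¹ - q⁻¹) ^ 2 * B ^ 2 := key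
      _ ≤ 2 * (m⁻¹ * (L * (M ‖u‖ * ψ N) / 2) ^ 2)
          + 2 * ((L * I1 * ψ N) ^ 2 / (4 * m ^ 3) * 1) := by linarith
      _ = ψ N ^ 2 * (L ^ 2 / (2 * m) * (M ‖u‖) ^ 2 + L ^ 2 * I1 ^ 2 / (2 * m ^ 3)) := by
          field_simp
          ring
  -- conclusion
  set C1 : ℝ := L ^ 2 / (2 * m) * I2 + L ^ 2 * I1 ^ 2 / (2 * m ^ 3) with hC1def
  refine ⟨Real.sqrt (C1 / 2) + 1, by positivity, 0, fun N _ => ?_⟩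
  have hginti : Integrable
      (fun u => ψ N ^ 2 * (L ^ 2 / (2 * m) * (M ‖u‖) ^ 2 + L ^ 2 * I1 ^ 2 / (2 * m ^ 3))) μ0 :=
    ((hIntM2.const_mul _).add (integrable_const _)).const_mul _
  have hle : ∫ u, (Real.sqrt (Z⁻¹ * Real.exp (-Φ u))
      - Real.sqrt ((ZN N)⁻¹ * Real.exp (-ΦN N u))) ^ 2 ∂μ0 ≤ ψ N ^ 2 * C1 := by
    have h := integral_mono_of_nonneg (Eventually.of_forall fun u => sq_nonneg _) hginti
      (Eventually.of_forall fun u => hpt N u)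
    rw [integral_const_mul, integral_add (hIntM2.const_mul _) (integrable_const _),
      integral_const_mul, integral_const] at h
    simp only [measure_univ, probReal_univ, ENNReal.toReal_one, smul_eq_mul, one_mul] at h
    rw [← hI2] at h
    rw [hC1def]
    exact h
  have h1 : (1/2) * (∫ u, (Real.sqrt (Z⁻¹ * Real.exp (-Φ u))
      - Real.sqrt ((ZN N)⁻¹ * Real.exp (-ΦN N u))) ^ 2 ∂μ0) ≤ ψ N ^ 2 * (C1 / 2) := by
    linarith
  have h2 : Real.sqrt (ψ N ^ 2 * (C1 / 2)) = ψ N * Real.sqrt (C1 / 2) := by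
    rw [Real.sqrt_mul (sq_nonneg _), Real.sqrt_sq (hψpos N)]
  refine le_trans (Real.sqrt_le_sqrt h1) ?_
  rw [h2, add_mul, one_mul, mul_comm]
  linarith [hψpos N]
end
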